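/- Let d ≥ 1, l ∈ ℤ, μ ∈ (0,2), and let c₁, c₂, c₃ ≥ 0 and c₄ > 0. Then there exist C₁ ≥ 0 and C₂ ≥ 0 such that for every measurable function f : ℝ^d → ℝ with |f(y)| ≤ c₁ exp(c₂‖y‖^μ) for all y, and every measurable function π : (0,1] × ℝ^d × ℝ^d → ℝ with |π(t,x,y)| ≤ c₃ t^{−(d+l)/2} exp(−c₄‖x−y‖²/t) for all t ∈ (0,1] and x, y ∈ ℝ^d, the integral ∫_{ℝ^d} f(y) π(t,x,y) dy converges absolutely and satisfies |∫_{ℝ^d} f(y) π(t,x,y) dy| ≤ C₁ t^{−l/2} exp(C₂‖x‖^μ) for all t ∈ (0,1] and x ∈ ℝ^d. -/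

import Mathlib

open MeasureTheory Real

noncomputable section

/-- `ℝ^d` with the Euclidean norm. -/
abbrev Eu (d : ℕ) := EuclideanSpace ℝ (Fin d)

/-- Iterated partial derivative along a list of coordinate directions. -/
noncomputable def pderivs {d : ℕ} : List (Fin d) → (Eu d → ℝ) → Eu d → ℝ
  | [], f => f
  | i :: l, f => pderivs l fun x => fderiv ℝ f x (EuclideanSpace.single i 1)

/-- The list of coordinates (with multiplicities) associated to a multi-index `m : ℕ^d`. -/
def mToList {d : ℕ} (m : Fin d → ℕ) : List (Fin d) :=
  (List.finRange d).flatMap fun i => List.replicate (m i) i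

/-- The partial derivative `∂^m` associated to a multi-index `m : ℕ^d`. -/
noncomputable def pderivM {d : ℕ} (m : Fin d → ℕ) (f : Eu d → ℝ) : Eu d → ℝ :=
  pderivs (mToList m) f

/-- The length `|m| = m₁ + ⋯ + m_d` of a multi-index. -/
def mlen {d : ℕ} (m : Fin d → ℕ) : ℕ := ∑ i, m i

/-- Mixed partial derivative `∂_x^α ∂_y^β f(x,y)` of a function of two `ℝ^d` variables. -/
noncomputable def D2 {d : ℕ} (α β : Fin d → ℕ) (f : Eu d → Eu d → ℝ) (x y : Eu d) : ℝ :=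
  pderivM α (fun x' => pderivM β (f x') y) x

lemma gauss_integrable (d : ℕ) {b : ℝ} (hb : 0 < b) :
    Integrable (fun v : Eu d => Real.exp (-b * ‖v‖ ^ 2)) := by
  have h := (GaussianFourier.integrable_cexp_neg_mul_sq_norm_add (V := Eu d)
    (b := (b : ℂ)) (by simpa using hb) 0 0).norm
  refine h.congr (Filter.Eventually.of_forall fun v => ?_)
  simp only [Complex.norm_exp]
  norm_num
  exact Or.inl (by norm_cast)

lemma gauss_integral (d : ℕ) {b : ℝ} (hb : 0 < b) :
    ∫ v : Eu d, Real.exp (-b * ‖v‖ ^ 2) = (π / b) ^ ((d : ℝ) / 2) := by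
  rw [GaussianFourier.integral_rexp_neg_mul_sq_norm hb]
  simp [finrank_euclideanSpace_fin]

lemma pow_add_le (μ : ℝ) (hμ : 0 ≤ μ) (a b : ℝ) (ha : 0 ≤ a) (hb : 0 ≤ b) :
    (a + b) ^ μ ≤ 2 ^ μ * (a ^ μ + b ^ μ) := by
  have hmax : a + b ≤ 2 * max a b := by
    rcases le_total a b with h | h
    · simp [max_eq_right h]; linarith
    · simp [max_eq_left h]; linarith
  calc (a + b) ^ μ ≤ (2 * max a b) ^ μ := Real.rpow_le_rpow (by positivity) hmax hμ
    _ = 2 ^ μ * (max a b) ^ μ := Real.mul_rpow (by norm_num) (by positivity)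
    _ ≤ 2 ^ μ * (a ^ μ + b ^ μ) := by
        have h1 : (max a b) ^ μ ≤ a ^ μ + b ^ μ := by
          rcases le_total a b with h | h
          · rw [max_eq_right h]; have := Real.rpow_nonneg ha μ; linarith
          · rw [max_eq_left h]; have := Real.rpow_nonneg hb μ; linarith
        have h2 : (0:ℝ) ≤ 2 ^ μ := by positivity
        nlinarith

lemma young_like {μ : ℝ} (hμ0 : 0 < μ) (hμ2 : μ < 2) {A c : ℝ} (hA : 0 ≤ A) (hc : 0 < c) :
    ∃ K ≥ (0:ℝ), ∀ r : ℝ, 0 ≤ r → A * r ^ μ ≤ c / 2 * r ^ (2:ℕ) + K := by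
  set R : ℝ := max 1 ((2 * A / c) ^ (1 / (2 - μ))) with hR
  have hR1 : (1:ℝ) ≤ R := le_max_left _ _
  have hR0 : 0 < R := lt_of_lt_of_le one_pos hR1
  refine ⟨A * R ^ μ, by positivity, fun r hr => ?_⟩
  rcases le_total r R with h | h
  · have h1 : A * r ^ μ ≤ A * R ^ μ :=
      mul_le_mul_of_nonneg_left (Real.rpow_le_rpow hr h hμ0.le) hA
    nlinarith [sq_nonneg r]
  · have hrpos : 0 < r := lt_of_lt_of_le hR0 h
    have h2μ : (0:ℝ) < 2 - μ := by linarith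
    have hkey : 2 * A / c ≤ r ^ (2 - μ) := by
      have h1 : (2 * A / c) ^ (1 / (2 - μ)) ≤ r := le_trans (le_max_right _ _) h
      have h2 : ((2 * A / c) ^ (1 / (2 - μ))) ^ (2 - μ) ≤ r ^ (2 - μ) :=
        Real.rpow_le_rpow (by positivity) h1 h2μ.le
      rwa [one_div, Real.rpow_inv_rpow (by positivity) h2μ.ne'] at h2
    have hA' : A ≤ c / 2 * r ^ (2 - μ) := by
      rw [div_le_iff₀ hc] at hkey
      linarith [hkey]
    have h3 : A * r ^ μ ≤ c / 2 * r ^ (2 - μ) * r ^ μ :=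
      mul_le_mul_of_nonneg_right hA' (Real.rpow_nonneg hrpos.le μ)
    have h4 : r ^ (2 - μ) * r ^ μ = r ^ (2:ℕ) := by
      rw [← Real.rpow_add hrpos]
      norm_num
    nlinarith [Real.rpow_nonneg hrpos.le μ, mul_nonneg hA (Real.rpow_nonneg hR0.le μ)]

theorem statement6 (d : ℕ) (hd : 1 ≤ d) (l : ℤ) (μ : ℝ) (hμ0 : 0 < μ) (hμ2 : μ < 2)
    (c₁ : ℝ) (hc₁ : 0 ≤ c₁) (c₂ : ℝ) (hc₂ : 0 ≤ c₂) (c₃ : ℝ) (hc₃ : 0 ≤ c₃)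
    (c₄ : ℝ) (hc₄ : 0 < c₄) :
    ∃ C₁ ≥ (0:ℝ), ∃ C₂ ≥ (0:ℝ), ∀ f : Eu d → ℝ, Measurable f →
      (∀ y : Eu d, |f y| ≤ c₁ * Real.exp (c₂ * ‖y‖ ^ μ)) →
      ∀ P : ℝ → Eu d → Eu d → ℝ,
        (∀ t ∈ Set.Ioc (0:ℝ) 1, ∀ x : Eu d, Measurable (P t x)) →
        (∀ t ∈ Set.Ioc (0:ℝ) 1, ∀ x y : Eu d,
          |P t x y| ≤ c₃ * t ^ (-((d : ℝ) + (l : ℝ)) / 2) * Real.exp (-c₄ * ‖x - y‖ ^ 2 / t)) →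
        ∀ t ∈ Set.Ioc (0:ℝ) 1, ∀ x : Eu d,
          Integrable (fun y => f y * P t x y) ∧
          |∫ y : Eu d, f y * P t x y| ≤ C₁ * t ^ (-(l : ℝ) / 2) * Real.exp (C₂ * ‖x‖ ^ μ) := by
  have h2μ : (0:ℝ) < 2 ^ μ := Real.rpow_pos_of_pos two_pos μ
  set A := c₂ * 2 ^ μ with hA
  have hA0 : 0 ≤ A := by positivity
  obtain ⟨K, hK0, hK⟩ := young_like hμ0 hμ2 hA0 hc₄
  refine ⟨c₁ * c₃ * Real.exp K * (2 * π / c₄) ^ ((d:ℝ)/2), by positivity, A, hA0, ?_⟩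
  intro f hf hfb P hPm hPb t ht x
  obtain ⟨ht0, ht1⟩ := ht
  set b := c₄ / (2 * t) with hb
  have hbpos : 0 < b := by positivity
  set E := t ^ (-((d : ℝ) + (l : ℝ)) / 2) with hE
  have hE0 : 0 < E := Real.rpow_pos_of_pos ht0 _
  set M := c₁ * c₃ * Real.exp K * Real.exp (A * ‖x‖ ^ μ) * E with hM
  have hM0 : 0 ≤ M := by positivity
  have hpt : ∀ y : Eu d, |f y * P t x y| ≤ M * Real.exp (-b * ‖y - x‖ ^ 2) := by
    intro y
    rw [show ‖y - x‖ = ‖x - y‖ from norm_sub_rev _ _]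
    set r := ‖x - y‖ with hr
    have hr0 : 0 ≤ r := norm_nonneg _
    have h1 : |f y * P t x y| ≤ (c₁ * Real.exp (c₂ * ‖y‖ ^ μ)) *
        (c₃ * E * Real.exp (-c₄ * r ^ 2 / t)) := by
      rw [abs_mul]
      exact mul_le_mul (hfb y) (hPb t ⟨ht0, ht1⟩ x y) (abs_nonneg _) (by positivity)
    refine h1.trans ?_
    have hexp : c₂ * ‖y‖ ^ μ + (-c₄ * r ^ 2 / t) ≤ K + A * ‖x‖ ^ μ + (-b * r ^ 2) := by
      have e1 : ‖y‖ ≤ ‖x‖ + r := by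
        have h := norm_add_le x (y - x)
        rw [show x + (y - x) = y from by abel, show ‖y - x‖ = r from norm_sub_rev _ _] at h
        exact h
      have e2 : ‖y‖ ^ μ ≤ (‖x‖ + r) ^ μ := Real.rpow_le_rpow (norm_nonneg y) e1 hμ0.le
      have e3 : (‖x‖ + r) ^ μ ≤ 2 ^ μ * (‖x‖ ^ μ + r ^ μ) :=
        pow_add_le μ hμ0.le _ _ (norm_nonneg x) hr0
      have e4 : c₂ * ‖y‖ ^ μ ≤ A * ‖x‖ ^ μ + A * r ^ μ := by
        have := mul_le_mul_of_nonneg_left (e2.trans e3) hc₂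
        rw [hA]; nlinarith
      have e5 := hK r hr0
      have e6 : c₄ / 2 * r ^ 2 ≤ c₄ / 2 * r ^ 2 / t := by
        rw [le_div_iff₀ ht0]
        nlinarith [mul_nonneg (mul_nonneg hc₄.le (sq_nonneg r)) (sub_nonneg.2 ht1)]
      have e7 : -c₄ * r ^ 2 / t = -(c₄ / 2 * r ^ 2 / t) - b * r ^ 2 := by
        rw [hb]; field_simp; ring
      rw [e7]
      linarith
    calc c₁ * Real.exp (c₂ * ‖y‖ ^ μ) * (c₃ * E * Real.exp (-c₄ * r ^ 2 / t))
        = c₁ * c₃ * E * Real.exp (c₂ * ‖y‖ ^ μ + (-c₄ * r ^ 2 / t)) := by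
          rw [Real.exp_add]; ring
      _ ≤ c₁ * c₃ * E * Real.exp (K + A * ‖x‖ ^ μ + (-b * r ^ 2)) :=
          mul_le_mul_of_nonneg_left (Real.exp_le_exp.2 hexp) (by positivity)
      _ = M * Real.exp (-b * r ^ 2) := by
          rw [hM, Real.exp_add, Real.exp_add]; ring
  have hg : Integrable (fun y : Eu d => M * Real.exp (-b * ‖y - x‖ ^ 2)) :=
    ((gauss_integrable d hbpos).comp_sub_right x).const_mul M
  have hmeas : AEStronglyMeasurable (fun y => f y * P t x y) (volume : Measure (Eu d)) :=
    (hf.mul (hPm t ⟨ht0, ht1⟩ x)).aestronglyMeasurable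
  have hint : Integrable (fun y => f y * P t x y) :=
    hg.mono' hmeas (ae_of_all _ fun y => by rw [Real.norm_eq_abs]; exact hpt y)
  refine ⟨hint, ?_⟩
  have h7 : |∫ y : Eu d, f y * P t x y| ≤ ∫ y : Eu d, M * Real.exp (-b * ‖y - x‖ ^ 2) := by
    rw [← Real.norm_eq_abs]
    exact norm_integral_le_of_norm_le hg (ae_of_all _ fun y => by
      rw [Real.norm_eq_abs]; exact hpt y)
  have h8 : ∫ y : Eu d, M * Real.exp (-b * ‖y - x‖ ^ 2) = M * (π / b) ^ ((d:ℝ)/2) := by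
    rw [MeasureTheory.integral_const_mul,
      integral_sub_right_eq_self (fun v : Eu d => Real.exp (-b * ‖v‖ ^ 2)) x,
      gauss_integral d hbpos]
  have e1 : (π / b) ^ ((d:ℝ)/2) = (2 * π / c₄) ^ ((d:ℝ)/2) * t ^ ((d:ℝ)/2) := by
    rw [show π / b = (2 * π / c₄) * t from by rw [hb]; field_simp]
    exact Real.mul_rpow (by positivity) ht0.le
  have e2 : E * t ^ ((d:ℝ)/2) = t ^ (-(l : ℝ) / 2) := by
    rw [hE, ← Real.rpow_add ht0]
    congr 1
    ring
  have h9 : M * (π / b) ^ ((d:ℝ)/2)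
      = c₁ * c₃ * Real.exp K * (2 * π / c₄) ^ ((d:ℝ)/2) * t ^ (-(l : ℝ) / 2)
        * Real.exp (A * ‖x‖ ^ μ) := by
    rw [e1, hM, show c₁ * c₃ * Real.exp K * Real.exp (A * ‖x‖ ^ μ) * E *
        ((2 * π / c₄) ^ ((d:ℝ)/2) * t ^ ((d:ℝ)/2))
      = c₁ * c₃ * Real.exp K * (2 * π / c₄) ^ ((d:ℝ)/2) * (E * t ^ ((d:ℝ)/2))
        * Real.exp (A * ‖x‖ ^ μ) from by ring, e2]
  rw [h8, h9] at h7
  exact h7
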